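/- Let κ > 0 and work on ℝ⁴ with coordinates x = (t, x_1, x_2, z). On the region {(x,x′) : z + z′ > 0}, the functions u′_0(x,x′) := 1 and v′_0(x,x′) := −2κ/(z+z′) satisfy the first Robin–Hadamard recursion relation for the massless (m = 0) field in dimension d = 4: □u′_0 + 2·σ_−^μ∂_μv′_0 + 2·v′_0 = 0 (equivalently σ_−^μ∂_μv′_0 = −v′_0), where derivatives are in x. Moreover, with u_0 := 1 and v_0 := 0, the associated boundary condition holds at z = 0: ∂_z(u_0 + u′_0)|_{z=0} + (∂_zσ)|_{z=0}·(v_0 − v′_0)|_{z=0} = κ·(u_0 + u′_0)|_{z=0}, both sides equaling 2κ (for z′ > 0). -/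

import Mathlib

noncomputable section

/-- The coordinate space ℝ^d = ℝ_t × ℝ^{d-2} × ℝ_z with d = n + 2. -/
abbrev Pt (n : ℕ) := ℝ × (Fin n → ℝ) × ℝ

/-- Partial derivative in the time coordinate `t`. -/
noncomputable def pdt {n : ℕ} (f : Pt n → ℝ) (x : Pt n) : ℝ :=
  deriv (fun s => f (s, x.2.1, x.2.2)) x.1

/-- Partial derivative in the transverse coordinate `x_i`. -/
noncomputable def pdx {n : ℕ} (i : Fin n) (f : Pt n → ℝ) (x : Pt n) : ℝ :=
  deriv (fun s => f (x.1, Function.update x.2.1 i s, x.2.2)) (x.2.1 i)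

/-- Partial derivative in the normal coordinate `z`. -/
noncomputable def pdz {n : ℕ} (f : Pt n → ℝ) (x : Pt n) : ℝ :=
  deriv (fun s => f (x.1, x.2.1, s)) x.2.2

/-- The d'Alembert operator □ = ∂_t² − Σ_i ∂_{x_i}² − ∂_z² (signature (+,−,…,−)). -/
noncomputable def box {n : ℕ} (f : Pt n → ℝ) (x : Pt n) : ℝ :=
  pdt (pdt f) x - (∑ i : Fin n, pdx i (pdx i f) x) - pdz (pdz f) x

/-- The Minkowskian contraction of gradients:
    f^μ∂_μ g = ∂_t f ∂_t g − Σ_i ∂_{x_i} f ∂_{x_i} g − ∂_z f ∂_z g. -/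
noncomputable def contr {n : ℕ} (f g : Pt n → ℝ) (x : Pt n) : ℝ :=
  pdt f x * pdt g x - (∑ i : Fin n, pdx i f x * pdx i g x) - pdz f x * pdz g x

/-- The Synge world function σ(x,x′), as a function of x for fixed x′. -/
noncomputable def synge {n : ℕ} (x' : Pt n) (x : Pt n) : ℝ :=
  (1/2) * ((x.1 - x'.1)^2 - (∑ i : Fin n, (x.2.1 i - x'.2.1 i)^2) - (x.2.2 - x'.2.2)^2)

/-- The reflected Synge world function σ₋(x,x′), as a function of x for fixed x′. -/
noncomputable def syngeR {n : ℕ} (x' : Pt n) (x : Pt n) : ℝ :=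
  (1/2) * ((x.1 - x'.1)^2 - (∑ i : Fin n, (x.2.1 i - x'.2.1 i)^2) - (x.2.2 + x'.2.2)^2)

/-- First Robin–Hadamard recursion relation for the massless field in d = 4 (n = 2):
on {z + z′ > 0}, u′_0 = 1 and v′_0 = −2κ/(z+z′) satisfy
□u′_0 + 2σ₋^μ∂_μv′_0 + 2v′_0 = 0 (equivalently σ₋^μ∂_μv′_0 = −v′_0); moreover, with
u_0 = 1 and v_0 = 0, at z = 0 (for z′ > 0) the boundary condition
∂_z(u_0 + u′_0)|_{z=0} + (∂_zσ)|_{z=0}(v_0 − v′_0)|_{z=0} = κ(u_0 + u′_0)|_{z=0}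
holds, both sides equaling 2κ. -/
theorem robin_hadamard_first_recursion_4d (κ : ℝ) (hκ : 0 < κ) (x' : Pt 2) :
    (∀ x : Pt 2, 0 < x.2.2 + x'.2.2 →
      (box (fun _ : Pt 2 => (1 : ℝ)) x
        + 2 * contr (syngeR x') (fun y : Pt 2 => -2 * κ / (y.2.2 + x'.2.2)) x
        + 2 * (-2 * κ / (x.2.2 + x'.2.2)) = 0 ∧
      contr (syngeR x') (fun y : Pt 2 => -2 * κ / (y.2.2 + x'.2.2)) x
        = -(-2 * κ / (x.2.2 + x'.2.2)))) ∧
    (0 < x'.2.2 → ∀ (t : ℝ) (yy : Fin 2 → ℝ),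
      (pdz (fun _ : Pt 2 => (1 : ℝ) + 1) (t, yy, 0)
        + pdz (synge x') (t, yy, 0) * ((0 : ℝ) - (-2 * κ / ((0 : ℝ) + x'.2.2)))
        = κ * ((1 : ℝ) + 1) ∧
      κ * ((1 : ℝ) + 1) = 2 * κ)) := by
  constructor
  · intro x hx
    have hz : x.2.2 + x'.2.2 ≠ 0 := ne_of_gt hx
    have hbox : box (fun _ : Pt 2 => (1 : ℝ)) x = 0 := by
      simp [box, pdt, pdx, pdz]
    have hpt : pdt (fun y : Pt 2 => -2 * κ / (y.2.2 + x'.2.2)) x = 0 := by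
      simp [pdt]
    have hpx : ∀ i, pdx i (fun y : Pt 2 => -2 * κ / (y.2.2 + x'.2.2)) x = 0 := by
      intro i; simp [pdx]
    have hpz : pdz (fun y : Pt 2 => -2 * κ / (y.2.2 + x'.2.2)) x
        = 2 * κ / (x.2.2 + x'.2.2) ^ 2 := by
      have h1 : HasDerivAt (fun s : ℝ => s + x'.2.2) 1 x.2.2 :=
        (hasDerivAt_id _).add_const _
      have h2 := (h1.inv hz).const_mul (-2 * κ)
      have h3 : HasDerivAt (fun s : ℝ => -2 * κ / (s + x'.2.2))
          (2 * κ / (x.2.2 + x'.2.2) ^ 2) x.2.2 := by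
        convert h2 using 1
        · rfl
        · rfl
        · funext s; simp [div_eq_mul_inv]
        · ring
      exact h3.deriv
    have hpzσ : pdz (syngeR x') x = -(x.2.2 + x'.2.2) := by
      have h1 : HasDerivAt (fun s : ℝ => (s + x'.2.2) ^ 2)
          (2 * (x.2.2 + x'.2.2)) x.2.2 := by
        simpa using ((hasDerivAt_id x.2.2).add_const x'.2.2).fun_pow 2
      have h2 := (((hasDerivAt_const x.2.2
          ((x.1 - x'.1) ^ 2 - (∑ i : Fin 2, (x.2.1 i - x'.2.1 i) ^ 2))).sub
          h1)).const_mul (1 / 2 : ℝ)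
      have h3 : HasDerivAt (fun s : ℝ => (1 / 2 : ℝ) * ((x.1 - x'.1) ^ 2
            - (∑ i : Fin 2, (x.2.1 i - x'.2.1 i) ^ 2) - (s + x'.2.2) ^ 2))
          (-(x.2.2 + x'.2.2)) x.2.2 := by
        convert h2 using 1
        · rfl
        · rfl
        · rfl
        · ring
      exact h3.deriv
    have hcontr : contr (syngeR x') (fun y : Pt 2 => -2 * κ / (y.2.2 + x'.2.2)) x
        = -(-2 * κ / (x.2.2 + x'.2.2)) := by
      simp only [contr, hpt, hpz, hpzσ, hpx, mul_zero, Finset.sum_const_zero]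
      field_simp
      ring
    refine ⟨?_, hcontr⟩
    rw [hbox, hcontr]
    ring
  · intro hz' t yy
    have hzne : x'.2.2 ≠ 0 := ne_of_gt hz'
    have h1 : pdz (fun _ : Pt 2 => (1 : ℝ) + 1) (t, yy, 0) = 0 := by
      simp [pdz]
    have h2 : pdz (synge x') (t, yy, (0 : ℝ)) = x'.2.2 := by
      have ha : HasDerivAt (fun s : ℝ => (s - x'.2.2) ^ 2)
          (2 * ((0 : ℝ) - x'.2.2)) 0 := by
        simpa using ((hasDerivAt_id (0 : ℝ)).sub_const x'.2.2).fun_pow 2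
      have hb := (((hasDerivAt_const (0 : ℝ)
          ((t - x'.1) ^ 2 - (∑ i : Fin 2, (yy i - x'.2.1 i) ^ 2))).sub
          ha)).const_mul (1 / 2 : ℝ)
      have hc : HasDerivAt (fun s : ℝ => (1 / 2 : ℝ) * ((t - x'.1) ^ 2
            - (∑ i : Fin 2, (yy i - x'.2.1 i) ^ 2) - (s - x'.2.2) ^ 2))
          x'.2.2 0 := by
        convert hb using 1
        · rfl
        · rfl
        · rfl
        · ring
      exact hc.deriv
    constructor
    · rw [h1, h2]
      field_simp
      ring
    · ring

end
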